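/- Let ψ : (0,∞) → (0,∞) be concave and increasing with ψ(t) → ∞ as t → ∞. Let ω be a singular dilation-invariant state on ℓ∞ (vanishing on c₀, invariant under each dilation σₙ), extended to nonnegative unbounded sequences by ω̄(x) = sup{ω(y) : 0 ≤ y ≤ x, y ∈ ℓ∞}. For nonincreasing nonnegative sequences a define τ_ω(a) = ω̄({ (1/ψ(n+1)) ∑_{k=0}^{n} a(k) }_{n≥0}). Suppose τ_ω is finite on all nonincreasing a with sup_n (1/ψ(n+1)) ∑_{k=0}^n a(k) < ∞. If τ_ω is additive in the sense that τ_ω(c) = τ_ω(a) + τ_ω(b) whenever c is the nonincreasing rearrangement of the disjoint sum of nonincreasing sequences a and b, then ω({ψ(2n+1)/ψ(n+1)}_{n≥0}) = 1. -/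

import Mathlib

open Filter
open scoped ENNReal

/-- A sequence `x : ℕ → ℝ` is bounded (an element of `ℓ∞`). -/
def Bdd (x : ℕ → ℝ) : Prop := ∃ C, ∀ n, |x n| ≤ C

/-- A state on `ℓ∞`: a positive linear functional `ω` with `ω(1) = 1`.
We model it as a function on all sequences whose linearity and positivity
are only required on bounded sequences. -/
structure LinfState where
  toFun : (ℕ → ℝ) → ℝ
  map_add' : ∀ x y, Bdd x → Bdd y → toFun (x + y) = toFun x + toFun y
  map_smul' : ∀ (c : ℝ) (x), Bdd x → toFun (c • x) = c * toFun x
  pos' : ∀ x, Bdd x → (∀ n, 0 ≤ x n) → 0 ≤ toFun x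
  map_one' : toFun (fun _ => (1 : ℝ)) = 1

/-- The extension `ω̄` of a state `ω` to arbitrary nonnegative (possibly
unbounded) sequences, with values in `[0,∞]`:
`ω̄(x) = sup { ω(y) : y ∈ ℓ∞, 0 ≤ y ≤ x }`. -/
noncomputable def LinfState.ext (S : LinfState) (x : ℕ → ℝ) : ℝ≥0∞ :=
  ⨆ y ∈ {y : ℕ → ℝ | Bdd y ∧ (∀ n, 0 ≤ y n) ∧ ∀ n, y n ≤ x n},
    ENNReal.ofReal (S.toFun y)

/-- The `ψ`-Cesàro transform: `a ↦ { (1/ψ(n+1)) ∑_{k=0}^n a(k) }_{n≥0}`,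
followed by the extended state `ω̄`. -/
noncomputable def tau (S : LinfState) (ψ : ℝ → ℝ) (a : ℕ → ℝ) : ℝ≥0∞ :=
  S.ext (fun n => (∑ k ∈ Finset.range (n + 1), a k) / ψ ((n : ℝ) + 1))

lemma bdd_sub {x y : ℕ → ℝ} (hx : Bdd x) (hy : Bdd y) : Bdd (fun n => x n - y n) := by
  obtain ⟨C, hC⟩ := hx; obtain ⟨D, hD⟩ := hy
  exact ⟨C + D, fun n => (abs_sub _ _).trans (add_le_add (hC n) (hD n))⟩

lemma bdd_smul (c : ℝ) {x : ℕ → ℝ} (hx : Bdd x) : Bdd (c • x) := by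
  obtain ⟨C, hC⟩ := hx
  exact ⟨|c| * C, fun n => by
    simp only [Pi.smul_apply, smul_eq_mul, abs_mul]
    exact mul_le_mul_of_nonneg_left (hC n) (abs_nonneg c)⟩

lemma bdd_of_bounds {x : ℕ → ℝ} {C : ℝ} (h0 : ∀ n, 0 ≤ x n) (h1 : ∀ n, x n ≤ C) : Bdd x :=
  ⟨C, fun n => by rw [abs_of_nonneg (h0 n)]; exact h1 n⟩

lemma LinfState.zero_eq (S : LinfState) : S.toFun (fun _ => 0) = 0 := by
  have h := S.map_smul' 0 (fun _ => (1:ℝ)) ⟨1, by norm_num⟩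
  simp at h; exact h

lemma LinfState.mono' (S : LinfState) {x y : ℕ → ℝ} (hx : Bdd x) (hy : Bdd y)
    (h : ∀ n, x n ≤ y n) : S.toFun x ≤ S.toFun y := by
  have hd : Bdd (fun n => y n - x n) := bdd_sub hy hx
  have he : y = x + fun n => y n - x n := by funext n; simp
  have := S.map_add' x (fun n => y n - x n) hx hd
  rw [he, this]
  have hp := S.pos' _ hd (fun n => by simp [h n])
  linarith

lemma LinfState.nullCongr (S : LinfState)
    (hsing : ∀ x : ℕ → ℝ, Bdd x → Tendsto x atTop (nhds 0) → S.toFun x = 0)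
    {x y : ℕ → ℝ} (hx : Bdd x) (hy : Bdd y)
    (h : Tendsto (fun n => x n - y n) atTop (nhds 0)) : S.toFun x = S.toFun y := by
  have hd : Bdd (fun n => x n - y n) := bdd_sub hx hy
  have he : x = y + fun n => x n - y n := by funext n; simp
  rw [he, S.map_add' _ _ hy hd, hsing _ hd h, add_zero]

lemma LinfState.ext_eq (S : LinfState) {x : ℕ → ℝ} (hx : Bdd x) (h0 : ∀ n, 0 ≤ x n) :
    S.ext x = ENNReal.ofReal (S.toFun x) := by
  unfold LinfState.ext
  apply le_antisymm
  · refine iSup₂_le fun y hy => ?_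
    exact ENNReal.ofReal_le_ofReal (S.mono' hy.1 hx hy.2.2)
  · exact le_iSup₂_of_le x ⟨hx, h0, fun n => le_rfl⟩ le_rfl

def eqv2 : ℕ ≃ ℕ ⊕ ℕ where
  toFun k := if k % 2 = 0 then Sum.inl (k / 2) else Sum.inr (k / 2)
  invFun s := Sum.elim (fun m => 2 * m) (fun m => 2 * m + 1) s
  left_inv k := by simp only [Equiv.coe_fn_mk]; split <;> simp <;> omega
  right_inv s := by
    rcases s with m | m
    · show (if (2*m) % 2 = 0 then Sum.inl ((2*m)/2) else Sum.inr ((2*m)/2)) = Sum.inl m; rw [if_pos (by omega)]; congr 1; omega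
    · show (if (2*m+1) % 2 = 0 then Sum.inl ((2*m+1)/2) else Sum.inr ((2*m+1)/2)) = Sum.inr m; rw [if_neg (by omega)]; congr 1; omega

lemma eqv2_elim (a : ℕ → ℝ) (k : ℕ) : a (k / 2) = Sum.elim a a (eqv2 k) := by
  show a (k/2) = Sum.elim a a (if k % 2 = 0 then Sum.inl (k / 2) else Sum.inr (k / 2))
  split <;> rfl

noncomputable def inc (ψ : ℝ → ℝ) (k : ℕ) : ℝ := ψ ((k:ℝ)+2) - ψ ((k:ℝ)+1)

lemma inc_nonneg {ψ : ℝ → ℝ} (hmono : MonotoneOn ψ (Set.Ioi (0 : ℝ))) (k : ℕ) :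
    0 ≤ inc ψ k := by
  have := hmono (Set.mem_Ioi.mpr (by positivity : (0:ℝ) < (k:ℝ)+1))
    (Set.mem_Ioi.mpr (by positivity : (0:ℝ) < (k:ℝ)+2)) (by linarith)
  simpa [inc] using this

lemma inc_anti {ψ : ℝ → ℝ} (hconc : ConcaveOn ℝ (Set.Ioi (0 : ℝ)) ψ) :
    Antitone (inc ψ) := by
  apply antitone_nat_of_succ_le
  intro k
  have h := hconc.2 (Set.mem_Ioi.mpr (by positivity : (0:ℝ) < (k:ℝ)+1))
    (Set.mem_Ioi.mpr (by positivity : (0:ℝ) < (k:ℝ)+3))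
    (by norm_num : (0:ℝ) ≤ 1/2) (by norm_num : (0:ℝ) ≤ 1/2) (by norm_num)
  simp only [smul_eq_mul] at h
  have harg : (1/2 : ℝ) * ((k:ℝ)+1) + (1/2 : ℝ) * ((k:ℝ)+3) = (k:ℝ)+2 := by ring
  rw [harg] at h
  simp only [inc]
  push_cast
  have : ((k:ℝ)+1+2) = (k:ℝ)+3 := by ring
  rw [this]
  have : ((k:ℝ)+1+1) = (k:ℝ)+2 := by ring
  rw [this]
  linarith

lemma inc_sum (ψ : ℝ → ℝ) : ∀ N : ℕ, ∑ k ∈ Finset.range N, inc ψ k = ψ ((N:ℝ)+1) - ψ 1 := by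
  intro N
  induction N with
  | zero => simp
  | succ n ih =>
    rw [Finset.sum_range_succ, ih]
    simp only [inc]
    push_cast
    ring_nf

lemma inc_le {ψ : ℝ → ℝ} (hmono : MonotoneOn ψ (Set.Ioi (0 : ℝ)))
    (hconc : ConcaveOn ℝ (Set.Ioi (0 : ℝ)) ψ) (hpos : ∀ t > (0 : ℝ), 0 < ψ t)
    (m : ℕ) (hm : 1 ≤ m) : (m:ℝ) * inc ψ m ≤ ψ ((m:ℝ)+1) := by
  have h1 : (m:ℝ) * inc ψ m ≤ ∑ k ∈ Finset.range m, inc ψ k := by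
    have : ∀ k ∈ Finset.range m, inc ψ m ≤ inc ψ k := fun k hk =>
      inc_anti hconc (le_of_lt (Finset.mem_range.mp hk))
    calc (m:ℝ) * inc ψ m = ∑ _k ∈ Finset.range m, inc ψ m := by
          simp [Finset.sum_const, mul_comm]
      _ ≤ _ := Finset.sum_le_sum this
  rw [inc_sum ψ m] at h1
  have := hpos 1 (by norm_num)
  linarith

lemma psi_double {ψ : ℝ → ℝ} (hmono : MonotoneOn ψ (Set.Ioi (0 : ℝ)))
    (hconc : ConcaveOn ℝ (Set.Ioi (0 : ℝ)) ψ) (hpos : ∀ t > (0 : ℝ), 0 < ψ t)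
    (m : ℕ) : ψ (2*(m:ℝ)+2) ≤ 2 * ψ ((m:ℝ)+2) := by
  have key : ∑ k ∈ Finset.range (2*m+1), inc ψ k ≤ 2 * ∑ k ∈ Finset.range (m+1), inc ψ k := by
    rw [show 2*m+1 = (m+1) + m by ring, Finset.sum_range_add]
    have h2 : ∑ i ∈ Finset.range m, inc ψ (m + 1 + i) ≤ ∑ i ∈ Finset.range m, inc ψ i :=
      Finset.sum_le_sum fun i _ => inc_anti hconc (by omega)
    have h3 : ∑ i ∈ Finset.range m, inc ψ i ≤ ∑ i ∈ Finset.range (m+1), inc ψ i := by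
      rw [Finset.sum_range_succ]
      have := inc_nonneg hmono m
      linarith
    linarith
  rw [inc_sum, inc_sum] at key
  push_cast at key
  rw [show (2*(m:ℝ)+1+1) = 2*(m:ℝ)+2 by ring, show ((m:ℝ)+1+1) = (m:ℝ)+2 by ring] at key
  have := hpos 1 (by norm_num)
  linarith

lemma sum_c (ψ : ℝ → ℝ) : ∀ N : ℕ, ∑ k ∈ Finset.range N, inc ψ (k / 2) =
    ψ (((N/2 : ℕ):ℝ)+1) + ψ ((((N+1)/2 : ℕ):ℝ)+1) - 2 * ψ 1 := by
  intro N
  induction N with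
  | zero => norm_num; ring
  | succ n ih =>
    rw [Finset.sum_range_succ, ih]
    rw [show (n+1+1)/2 = n/2 + 1 from by omega]
    simp only [inc]
    push_cast
    ring_nf

lemma core_even (A B C D E M : ℝ) (hE : 0 < E) (hEA : E ≤ A) (hAB : A ≤ B) (hBC : B ≤ C)
    (hCD : C ≤ D) (hD2B : D ≤ 2*B) (h1 : M*(B-A) ≤ A) (h2 : 2*M*(D-C) ≤ C) (hM : 1 ≤ M) :
    |(A + B - 2*E)/C - 2*B/D| ≤ 2/M + 2*E/A := by
  have hA : 0 < A := lt_of_lt_of_le hE hEA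
  have hB : 0 < B := lt_of_lt_of_le hA hAB
  have hC : 0 < C := lt_of_lt_of_le hB hBC
  have hD : 0 < D := lt_of_lt_of_le hC hCD
  have hM0 : (0:ℝ) < M := lt_of_lt_of_le one_pos hM
  have hd : (A + B - 2*E)/C - 2*B/D
      = (A - B)/C + 2*B*(D-C)/(C*D) - 2*E/C := by field_simp; ring
  have hT1 : |(A - B)/C| ≤ 1/M := by
    rw [abs_div, abs_of_pos hC, abs_of_nonpos (by linarith : A - B ≤ 0), neg_sub,
      div_le_div_iff₀ hC hM0]
    nlinarith
  have hT2 : |2*B*(D-C)/(C*D)| ≤ 1/M := by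
    rw [abs_of_nonneg (div_nonneg (mul_nonneg (by linarith) (by linarith)) (by positivity)),
      div_le_div_iff₀ (by positivity) hM0]
    have t1 : B*(2*M*(D-C)) ≤ B*C := mul_le_mul_of_nonneg_left h2 hB.le
    have t2 : B*C ≤ D*C := mul_le_mul_of_nonneg_right (by linarith) hC.le
    nlinarith
  have hT3 : |2*E/C| ≤ 2*E/A := by
    rw [abs_of_nonneg (by positivity), div_le_div_iff₀ hC hA]
    nlinarith
  calc |(A + B - 2*E)/C - 2*B/D|
      = |(A - B)/C + 2*B*(D-C)/(C*D) + (- (2*E/C))| := by rw [hd]; ring_nf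
    _ ≤ |(A - B)/C + 2*B*(D-C)/(C*D)| + |(- (2*E/C))| := abs_add_le _ _
    _ ≤ |(A - B)/C| + |2*B*(D-C)/(C*D)| + |(- (2*E/C))| := by
        have := abs_add_le ((A - B)/C) (2*B*(D-C)/(C*D)); linarith
    _ ≤ 1/M + 1/M + 2*E/A := by rw [abs_neg]; linarith
    _ = 2/M + 2*E/A := by ring

lemma core_final (A B C D M : ℝ) (hA : 0 < A) (hAB : A ≤ B) (hBC : B ≤ C) (hCD : C ≤ D)
    (hD2B : D ≤ 2*B) (hDCBA : D - C ≤ B - A) (h1 : M*(B-A) ≤ A) (hM : 1 ≤ M) :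
    |C/A - D/B| ≤ 3/M := by
  have hB : 0 < B := lt_of_lt_of_le hA hAB
  have hC : 0 < C := lt_of_lt_of_le hB hBC
  have hD : 0 < D := lt_of_lt_of_le hC hCD
  have hM0 : (0:ℝ) < M := lt_of_lt_of_le one_pos hM
  have hd : C/A - D/B = (C - D)/A + D*(B-A)/(A*B) := by field_simp; ring
  have hT1 : |(C - D)/A| ≤ 1/M := by
    rw [abs_div, abs_of_pos hA, abs_of_nonpos (by linarith : C - D ≤ 0), neg_sub,
      div_le_div_iff₀ hA hM0]
    nlinarith
  have hT2 : |D*(B-A)/(A*B)| ≤ 2/M := by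
    rw [abs_of_nonneg (div_nonneg (mul_nonneg hD.le (by linarith)) (by positivity)),
      div_le_div_iff₀ (by positivity) hM0]
    have t0 : D*((B-A)*M) ≤ (2*B)*((B-A)*M) :=
      mul_le_mul_of_nonneg_right hD2B (by nlinarith)
    have t1 : (2*B)*(M*(B-A)) ≤ (2*B)*A := mul_le_mul_of_nonneg_left h1 (by linarith)
    nlinarith
  calc |C/A - D/B| = |(C - D)/A + D*(B-A)/(A*B)| := by rw [hd]
    _ ≤ |(C - D)/A| + |D*(B-A)/(A*B)| := abs_add_le _ _
    _ ≤ 1/M + 2/M := by linarith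
    _ = 3/M := by ring


set_option maxHeartbeats 1000000 in
/-- If the Dixmier weight `τ_ω` associated with a concave increasing unbounded
`ψ` and a singular dilation-invariant state `ω` is finite on all nonincreasing
sequences of the corresponding Marcinkiewicz ideal, and is additive on disjoint
sums (i.e. `τ_ω(c) = τ_ω(a) + τ_ω(b)` whenever `c` is the nonincreasing
rearrangement of the disjoint sum of nonincreasing `a` and `b`), then
`ω({ψ(2n+1)/ψ(n+1)}) = 1`. -/
theorem omega_ratio_eq_one_of_additive (S : LinfState) (ψ : ℝ → ℝ)
    (hpos : ∀ t > (0 : ℝ), 0 < ψ t)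
    (hmono : MonotoneOn ψ (Set.Ioi (0 : ℝ)))
    (hconc : ConcaveOn ℝ (Set.Ioi (0 : ℝ)) ψ)
    (htop : Tendsto ψ atTop atTop)
    (hsing : ∀ x : ℕ → ℝ, Bdd x → Tendsto x atTop (nhds 0) → S.toFun x = 0)
    (hdilinv : ∀ n : ℕ, 1 ≤ n → ∀ x : ℕ → ℝ, Bdd x →
      S.toFun (fun k => x (k / n)) = S.toFun x)
    (hfin : ∀ a : ℕ → ℝ, Antitone a → (∀ k, 0 ≤ a k) →
      (∃ M : ℝ, ∀ n, (∑ k ∈ Finset.range (n + 1), a k) ≤ M * ψ ((n : ℝ) + 1)) →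
      tau S ψ a < ⊤)
    (hadd : ∀ a b c : ℕ → ℝ, Antitone a → Antitone b → Antitone c →
      (∀ k, 0 ≤ a k) → (∀ k, 0 ≤ b k) →
      (∃ e : ℕ ≃ ℕ ⊕ ℕ, ∀ k, c k = Sum.elim a b (e k)) →
      tau S ψ c = tau S ψ a + tau S ψ b) :
    S.toFun (fun n => ψ (2 * (n : ℝ) + 1) / ψ ((n : ℝ) + 1)) = 1 := by
  classical
  clear hfin
  -- basic facts about ψ
  have hψ1 : (0:ℝ) < ψ 1 := hpos 1 one_pos
  have hψp : ∀ t : ℝ, 1 ≤ t → 0 < ψ t := fun t ht => hpos t (by linarith)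
  have hψm : ∀ s t : ℝ, 1 ≤ s → s ≤ t → ψ s ≤ ψ t := fun s t hs hst =>
    hmono (Set.mem_Ioi.mpr (by linarith)) (Set.mem_Ioi.mpr (by linarith)) hst
  set a : ℕ → ℝ := inc ψ with ha
  have hanti : Antitone a := inc_anti hconc
  have hnn : ∀ k, 0 ≤ a k := inc_nonneg hmono
  have hψtop : Tendsto (fun n : ℕ => ψ ((n:ℝ)+1)) atTop atTop :=
    htop.comp (tendsto_atTop_add_const_right atTop 1 tendsto_natCast_atTop_atTop)
  have hdiv_le : ∀ num den K : ℝ, ψ 1 ≤ den → num ≤ den * K → num / den ≤ K := by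
    intro num den K hden h
    have hd : 0 < den := lt_of_lt_of_le hψ1 hden
    rw [div_le_iff₀ hd]
    calc num ≤ den * K := h
      _ = K * den := mul_comm _ _
  have hmul : ∀ den : ℝ, ψ 1 ≤ den → ψ 2 ≤ den * (ψ 2 / ψ 1) := by
    intro den h
    have h2 : 0 ≤ ψ 2 / ψ 1 := div_nonneg (hψp 2 one_le_two).le hψ1.le
    calc ψ 2 = ψ 1 * (ψ 2 / ψ 1) := by field_simp
      _ ≤ den * (ψ 2 / ψ 1) := mul_le_mul_of_nonneg_right h h2
  have hstep : ∀ n : ℕ, ψ ((n:ℝ)+2) ≤ ψ ((n:ℝ)+1) + ψ 2 := by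
    intro n
    have h0 : a n ≤ a 0 := hanti (Nat.zero_le n)
    have ha0 : a 0 = ψ 2 - ψ 1 := by simp [ha, inc]
    have : a n = ψ ((n:ℝ)+2) - ψ ((n:ℝ)+1) := rfl
    rw [this, ha0] at h0
    linarith
  -- the sequence ga from tau a
  set ga : ℕ → ℝ := fun n => (ψ ((n:ℝ)+2) - ψ 1) / ψ ((n:ℝ)+1) with hga
  have htaua : tau S ψ a = S.ext ga := by
    unfold tau
    congr 1
    funext n
    rw [inc_sum ψ (n+1)]
    simp only [hga]
    push_cast
    ring_nf
  have hga0 : ∀ n, 0 ≤ ga n := by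
    intro n
    apply div_nonneg _ (hψp _ (by push_cast; linarith [Nat.cast_nonneg (α := ℝ) n])).le
    have := hψm 1 ((n:ℝ)+2) le_rfl (by linarith [Nat.cast_nonneg (α := ℝ) n])
    linarith
  have hgaB : ∀ n, ga n ≤ 1 + ψ 2 / ψ 1 := by
    intro n
    have hden : ψ 1 ≤ ψ ((n:ℝ)+1) := hψm 1 _ le_rfl (by linarith [Nat.cast_nonneg (α := ℝ) n])
    apply hdiv_le _ _ _ hden
    have := hstep n
    have := hmul _ hden
    nlinarith [hψ1]
  have hgaBdd : Bdd ga := bdd_of_bounds hga0 hgaB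
  have hωga : S.toFun ga = 1 := by
    have h1Bdd : Bdd (fun _ : ℕ => (1:ℝ)) := ⟨1, by norm_num⟩
    rw [← S.map_one']
    apply S.nullCongr hsing hgaBdd h1Bdd
    apply squeeze_zero_norm' (a := fun n : ℕ => 1/(n:ℝ) + ψ 1 / ψ ((n:ℝ)+1))
    · filter_upwards [eventually_ge_atTop 1] with n hn
      have hn1 : (1:ℝ) ≤ (n:ℝ) := by exact_mod_cast hn
      have hden : 0 < ψ ((n:ℝ)+1) := hψp _ (by linarith)
      have hdiff : ga n - 1 = (a n - ψ 1) / ψ ((n:ℝ)+1) := by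
        have : a n = ψ ((n:ℝ)+2) - ψ ((n:ℝ)+1) := rfl
        rw [hga, this]
        field_simp
        ring
      rw [Real.norm_eq_abs, hdiff, abs_div, abs_of_pos hden]
      have habs : |a n - ψ 1| ≤ a n + ψ 1 := by
        rw [abs_le]; constructor <;> [linarith [hnn n]; linarith [hψ1.le]]
      have hle : a n / ψ ((n:ℝ)+1) ≤ 1/(n:ℝ) := by
        rw [div_le_div_iff₀ hden (by linarith : (0:ℝ) < (n:ℝ))]
        have := inc_le hmono hconc hpos n hn
        calc a n * (n:ℝ) = (n:ℝ) * inc ψ n := by rw [mul_comm]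
          _ ≤ ψ ((n:ℝ)+1) := this
          _ = 1 * ψ ((n:ℝ)+1) := (one_mul _).symm
      calc |a n - ψ 1| / ψ ((n:ℝ)+1) ≤ (a n + ψ 1) / ψ ((n:ℝ)+1) := by gcongr
        _ = a n / ψ ((n:ℝ)+1) + ψ 1 / ψ ((n:ℝ)+1) := add_div _ _ _
        _ ≤ 1/(n:ℝ) + ψ 1 / ψ ((n:ℝ)+1) := by linarith
    · have l1 : Tendsto (fun n : ℕ => 1/(n:ℝ)) atTop (nhds 0) :=
        tendsto_one_div_atTop_nhds_zero_nat
      have l2 : Tendsto (fun n : ℕ => ψ 1 / ψ ((n:ℝ)+1)) atTop (nhds 0) :=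
        Tendsto.div_atTop tendsto_const_nhds hψtop
      simpa using l1.add l2
  have htaua' : tau S ψ a = ENNReal.ofReal 1 := by
    rw [htaua, S.ext_eq hgaBdd hga0, hωga]
  -- the doubled sequence c
  set c : ℕ → ℝ := fun k => a (k / 2) with hc
  have hcanti : Antitone c := fun i j h => hanti (Nat.div_le_div_right h)
  have htauc : tau S ψ c = tau S ψ a + tau S ψ a := by
    apply hadd a a c hanti hanti hcanti hnn hnn
    exact ⟨eqv2, fun k => eqv2_elim a k⟩
  set gc : ℕ → ℝ := fun n =>
    (ψ ((((n+1)/2 : ℕ):ℝ)+1) + ψ ((((n+1+1)/2 : ℕ):ℝ)+1) - 2 * ψ 1) / ψ ((n:ℝ)+1) with hgc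
  have htaucgc : tau S ψ c = S.ext gc := by
    unfold tau
    congr 1
    funext n
    rw [sum_c ψ (n+1)]
  -- bounds for gc
  have hcast1 : ∀ n : ℕ, (1:ℝ) ≤ ((n:ℕ):ℝ) + 1 := fun n => by
    linarith [Nat.cast_nonneg (α := ℝ) n]
  have hgc0 : ∀ n, 0 ≤ gc n := by
    intro n
    apply div_nonneg _ (hψp _ (hcast1 n)).le
    have u1 := hψm 1 _ le_rfl (hcast1 ((n+1)/2))
    have u2 := hψm 1 _ le_rfl (hcast1 ((n+1+1)/2))
    linarith
  have hgcB : ∀ n, gc n ≤ 2 + 2 * (ψ 2 / ψ 1) := by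
    intro n
    have hden : ψ 1 ≤ ψ ((n:ℝ)+1) := hψm 1 _ le_rfl (hcast1 n)
    apply hdiv_le _ _ _ hden
    have u1 : ψ ((((n+1)/2 : ℕ):ℝ)+1) ≤ ψ ((n:ℝ)+2) := by
      apply hψm _ _ (hcast1 _)
      have : (n+1)/2 ≤ n + 1 := by omega
      have := (Nat.cast_le (α := ℝ)).mpr this
      push_cast at this ⊢
      linarith
    have u2 : ψ ((((n+1+1)/2 : ℕ):ℝ)+1) ≤ ψ ((n:ℝ)+2) := by
      apply hψm _ _ (hcast1 _)
      have : (n+1+1)/2 ≤ n + 1 := by omega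
      have := (Nat.cast_le (α := ℝ)).mpr this
      push_cast at this ⊢
      linarith
    have := hstep n
    have := hmul _ hden
    nlinarith [hψ1]
  have hgcBdd : Bdd gc := bdd_of_bounds hgc0 hgcB
  have hωgc : S.toFun gc = 2 := by
    have h1 : S.ext gc = ENNReal.ofReal 1 + ENNReal.ofReal 1 := by
      rw [← htaucgc, htauc, htaua']
    rw [S.ext_eq hgcBdd hgc0] at h1
    rw [← ENNReal.ofReal_add (by norm_num) (by norm_num)] at h1
    norm_num at h1
    exact h1
  -- the dilated sequence
  set x' : ℕ → ℝ := fun m => 2 * ψ ((m:ℝ)+2) / ψ (2*(m:ℝ)+2) with hx'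
  have hx'0 : ∀ m, 0 ≤ x' m := by
    intro m
    apply div_nonneg _ (hψp _ (by linarith [Nat.cast_nonneg (α := ℝ) m])).le
    linarith [(hψp ((m:ℝ)+2) (by linarith [Nat.cast_nonneg (α := ℝ) m])).le]
  have hx'2 : ∀ m, x' m ≤ 2 := by
    intro m
    apply hdiv_le _ _ _ (hψm 1 _ le_rfl (by linarith [Nat.cast_nonneg (α := ℝ) m]))
    have := hψm ((m:ℝ)+2) (2*(m:ℝ)+2) (by linarith [Nat.cast_nonneg (α := ℝ) m])
      (by linarith [Nat.cast_nonneg (α := ℝ) m])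
    linarith
  have hx'Bdd : Bdd x' := bdd_of_bounds hx'0 hx'2
  have hσBdd : Bdd (fun k => x' (k / 2)) := bdd_of_bounds (fun k => hx'0 _) (fun k => hx'2 _)
  -- gc is asymptotic to the dilation of x'
  have hωσ : S.toFun gc = S.toFun (fun k => x' (k / 2)) := by
    apply S.nullCongr hsing hgcBdd hσBdd
    apply squeeze_zero_norm'
      (a := fun k : ℕ => 2/((k/2 : ℕ):ℝ) + 2 * ψ 1 / ψ (((k/2 : ℕ):ℝ)+1))
    · filter_upwards [eventually_ge_atTop 2] with k hk
      rw [Real.norm_eq_abs]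
      rcases Nat.even_or_odd k with ⟨m, hm⟩ | ⟨m, hm⟩
      · -- even case : k = m + m
        subst hm
        have hm1 : 1 ≤ m := by omega
        have hm1' : (1:ℝ) ≤ (m:ℝ) := by exact_mod_cast hm1
        have e1 : ((m+m:ℕ):ℝ)+1 = 2*(m:ℝ)+1 := by push_cast; ring
        have e2 : ((m+1:ℕ):ℝ)+1 = (m:ℝ)+2 := by push_cast; ring
        simp only [hgc, hx']
        rw [show (m+m+1)/2 = m from by omega, show (m+m+1+1)/2 = m+1 from by omega,
          show (m+m)/2 = m from by omega, e1, e2]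
        have key := core_even (ψ ((m:ℝ)+1)) (ψ ((m:ℝ)+2)) (ψ (2*(m:ℝ)+1)) (ψ (2*(m:ℝ)+2))
          (ψ 1) (m:ℝ) hψ1 (hψm 1 _ le_rfl (by linarith)) (hψm _ _ (by linarith) (by linarith))
          (hψm _ _ (by linarith) (by linarith)) (hψm _ _ (by linarith) (by linarith))
          (psi_double hmono hconc hpos m) ?_ ?_ hm1'
        · convert key using 3 <;> ring
        · have := inc_le hmono hconc hpos m hm1
          have hae : inc ψ m = ψ ((m:ℝ)+2) - ψ ((m:ℝ)+1) := rfl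
          rw [hae] at this
          linarith
        · have h2m : 1 ≤ 2*m := by omega
          have := inc_le hmono hconc hpos (2*m) h2m
          have hae : inc ψ (2*m) = ψ (((2*m:ℕ):ℝ)+2) - ψ (((2*m:ℕ):ℝ)+1) := rfl
          rw [hae] at this
          push_cast at this
          linarith [this]
      · -- odd case : k = 2*m+1
        subst hm
        have hm1 : 1 ≤ m := by omega
        have hm1' : (1:ℝ) ≤ (m:ℝ) := by exact_mod_cast hm1
        have e1 : ((2*m+1:ℕ):ℝ)+1 = 2*(m:ℝ)+2 := by push_cast; ring
        have e2 : ((m+1:ℕ):ℝ)+1 = (m:ℝ)+2 := by push_cast; ring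
        simp only [hgc, hx']
        rw [show (2*m+1+1)/2 = m+1 from by omega, show (2*m+1+1+1)/2 = m+1 from by omega,
          show (2*m+1)/2 = m from by omega, e1, e2]
        have hB : 0 < ψ ((m:ℝ)+2) := hψp _ (by linarith)
        have hD : 0 < ψ (2*(m:ℝ)+2) := hψp _ (by linarith)
        have hA : ψ 1 ≤ ψ ((m:ℝ)+1) := hψm 1 _ le_rfl (by linarith)
        have hAD : ψ ((m:ℝ)+1) ≤ ψ (2*(m:ℝ)+2) := hψm _ _ (by linarith) (by linarith)
        have hdiffeq : (ψ ((m:ℝ)+2) + ψ ((m:ℝ)+2) - 2*ψ 1) / ψ (2*(m:ℝ)+2)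
            - 2 * ψ ((m:ℝ)+2) / ψ (2*(m:ℝ)+2) = -(2*ψ 1 / ψ (2*(m:ℝ)+2)) := by
          field_simp
          ring
        rw [hdiffeq, abs_neg, abs_of_nonneg (by positivity)]
        have t1 : 2*ψ 1 / ψ (2*(m:ℝ)+2) ≤ 2*ψ 1 / ψ ((m:ℝ)+1) := by
          apply div_le_div_of_nonneg_left (by linarith) (hψp _ (by linarith)) ?_
          · exact hAD
        have t2 : 0 ≤ 2/((m:ℕ):ℝ) := by positivity
        calc 2*ψ 1 / ψ (2*(m:ℝ)+2) ≤ 2*ψ 1 / ψ ((m:ℝ)+1) := t1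
          _ ≤ 2/(m:ℝ) + 2*ψ 1 / ψ ((m:ℝ)+1) := by linarith [t2]
    · have hdiv2 : Tendsto (fun k : ℕ => k / 2) atTop atTop := by
        apply Filter.tendsto_atTop_atTop.mpr
        intro b
        exact ⟨2*b, fun k hk => by omega⟩
      have l1 : Tendsto (fun m : ℕ => 2/((m:ℕ):ℝ) + 2 * ψ 1 / ψ ((m:ℝ)+1)) atTop (nhds 0) := by
        have a1 : Tendsto (fun m : ℕ => 2/((m:ℕ):ℝ)) atTop (nhds 0) :=
          Tendsto.div_atTop tendsto_const_nhds tendsto_natCast_atTop_atTop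
        have a2 : Tendsto (fun m : ℕ => 2 * ψ 1 / ψ ((m:ℝ)+1)) atTop (nhds 0) :=
          Tendsto.div_atTop tendsto_const_nhds hψtop
        simpa using a1.add a2
      exact l1.comp hdiv2
  have hωx' : S.toFun x' = 2 := by
    rw [← hdilinv 2 (by norm_num) x' hx'Bdd, ← hωσ, hωgc]
  -- the ratio sequence r and the conclusion
  set r : ℕ → ℝ := fun m => ψ (2*(m:ℝ)+2) / ψ ((m:ℝ)+2) with hr
  have hcast0 : ∀ m : ℕ, (0:ℝ) ≤ (m:ℝ) := fun m => Nat.cast_nonneg m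
  have hBpos : ∀ m : ℕ, 0 < ψ ((m:ℝ)+2) := fun m => hψp _ (by linarith [hcast0 m])
  have hDpos : ∀ m : ℕ, 0 < ψ (2*(m:ℝ)+2) := fun m => hψp _ (by linarith [hcast0 m])
  have hBD : ∀ m : ℕ, ψ ((m:ℝ)+2) ≤ ψ (2*(m:ℝ)+2) := fun m =>
    hψm _ _ (by linarith [hcast0 m]) (by linarith [hcast0 m])
  have hD2B : ∀ m : ℕ, ψ (2*(m:ℝ)+2) ≤ 2 * ψ ((m:ℝ)+2) := psi_double hmono hconc hpos
  have hr1 : ∀ m, 1 ≤ r m := fun m => (one_le_div (hBpos m)).mpr (hBD m)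
  have hr2 : ∀ m, r m ≤ 2 := fun m => by
    rw [hr, div_le_iff₀ (hBpos m)]
    linarith [hD2B m]
  -- ω(u) = 0 where u = 1 - 1/r
  set u : ℕ → ℝ := fun m => 1 - ψ ((m:ℝ)+2) / ψ (2*(m:ℝ)+2) with hu
  have hueq : u = (fun _ => (1:ℝ)) + (-(1/2) : ℝ) • x' := by
    funext m
    simp only [hu, hx', Pi.add_apply, Pi.smul_apply, smul_eq_mul]
    ring
  have h1Bdd : Bdd (fun _ : ℕ => (1:ℝ)) := ⟨1, by norm_num⟩
  have hωu : S.toFun u = 0 := by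
    rw [hueq, S.map_add' _ _ h1Bdd (bdd_smul _ hx'Bdd), S.map_one',
      S.map_smul' _ _ hx'Bdd, hωx']
    ring
  set v : ℕ → ℝ := fun m => (r m - 1) / 2 with hv
  have hv0 : ∀ m, 0 ≤ v m := fun m => by
    show 0 ≤ (r m - 1) / 2
    have := hr1 m
    linarith
  have hvu : ∀ m, v m ≤ u m := by
    intro m
    have hB := hBpos m
    have hD := hDpos m
    have h3 : (1 - ψ ((m:ℝ)+2) / ψ (2*(m:ℝ)+2)) - (r m - 1)/2
        = (ψ (2*(m:ℝ)+2) - ψ ((m:ℝ)+2)) * (2*ψ ((m:ℝ)+2) - ψ (2*(m:ℝ)+2))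
          / (2 * ψ ((m:ℝ)+2) * ψ (2*(m:ℝ)+2)) := by
      simp only [hr]
      generalize ψ ((m:ℝ)+2) = B at hB ⊢
      generalize ψ (2*(m:ℝ)+2) = D at hD ⊢
      field_simp
    have h4 : 0 ≤ (ψ (2*(m:ℝ)+2) - ψ ((m:ℝ)+2)) * (2*ψ ((m:ℝ)+2) - ψ (2*(m:ℝ)+2))
        / (2 * ψ ((m:ℝ)+2) * ψ (2*(m:ℝ)+2)) :=
      div_nonneg (mul_nonneg (by linarith [hBD m]) (by linarith [hD2B m])) (by positivity)
    show (r m - 1) / 2 ≤ 1 - ψ ((m:ℝ)+2) / ψ (2*(m:ℝ)+2)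
    linarith [h3, h4]
  have hvBdd : Bdd v := bdd_of_bounds hv0 (fun m => by
    show (r m - 1) / 2 ≤ (1:ℝ)/2
    have := hr2 m; linarith)
  have huBdd : Bdd u := bdd_of_bounds
    (fun m => by
      show 0 ≤ 1 - ψ ((m:ℝ)+2) / ψ (2*(m:ℝ)+2)
      rw [sub_nonneg, div_le_one (hDpos m)]; exact hBD m)
    (fun m => by
      show 1 - ψ ((m:ℝ)+2) / ψ (2*(m:ℝ)+2) ≤ 1
      have : 0 ≤ ψ ((m:ℝ)+2) / ψ (2*(m:ℝ)+2) := le_of_lt (div_pos (hBpos m) (hDpos m))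
      linarith)
  have hωv : S.toFun v = 0 := by
    have hle := S.mono' hvBdd huBdd hvu
    have hge := S.pos' v hvBdd hv0
    rw [hωu] at hle
    linarith
  have hωr : S.toFun r = 1 := by
    have hreq : r = (fun _ => (1:ℝ)) + (2:ℝ) • v := by
      funext m
      simp only [hv, Pi.add_apply, Pi.smul_apply, smul_eq_mul]
      ring
    rw [hreq, S.map_add' _ _ h1Bdd (bdd_smul _ hvBdd), S.map_one',
      S.map_smul' _ _ hvBdd, hωv]
    ring
  -- final comparison
  have hrBdd : Bdd r := bdd_of_bounds (fun m => le_trans zero_le_one (hr1 m)) hr2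
  have htgt0 : ∀ n : ℕ, 0 ≤ ψ (2*(n:ℝ)+1) / ψ ((n:ℝ)+1) := fun n =>
    div_nonneg (hψp _ (by linarith [hcast0 n])).le (hψp _ (by linarith [hcast0 n])).le
  have htgtB : ∀ n : ℕ, ψ (2*(n:ℝ)+1) / ψ ((n:ℝ)+1) ≤ 2 + 2 * (ψ 2 / ψ 1) := by
    intro n
    have hden : ψ 1 ≤ ψ ((n:ℝ)+1) := hψm 1 _ le_rfl (by linarith [hcast0 n])
    apply hdiv_le _ _ _ hden
    have u1 : ψ (2*(n:ℝ)+1) ≤ ψ (2*(n:ℝ)+2) :=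
      hψm _ _ (by linarith [hcast0 n]) (by linarith)
    have u2 := hD2B n
    have u3 := hstep n
    have u4 := hmul _ hden
    nlinarith [hψ1]
  have htgtBdd : Bdd (fun n : ℕ => ψ (2*(n:ℝ)+1) / ψ ((n:ℝ)+1)) := bdd_of_bounds htgt0 htgtB
  have hfinal : S.toFun (fun n : ℕ => ψ (2*(n:ℝ)+1) / ψ ((n:ℝ)+1)) = S.toFun r := by
    apply S.nullCongr hsing htgtBdd hrBdd
    apply squeeze_zero_norm' (a := fun n : ℕ => 3/(n:ℝ))
    · filter_upwards [eventually_ge_atTop 1] with n hn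
      have hn1 : (1:ℝ) ≤ (n:ℝ) := by exact_mod_cast hn
      rw [Real.norm_eq_abs, hr]
      have hABle : ψ ((n:ℝ)+1) ≤ ψ ((n:ℝ)+2) := hψm _ _ (by linarith [hcast0 n]) (by linarith)
      have hBCle : ψ ((n:ℝ)+2) ≤ ψ (2*(n:ℝ)+1) := hψm _ _ (by linarith [hcast0 n]) (by linarith)
      have hCDle : ψ (2*(n:ℝ)+1) ≤ ψ (2*(n:ℝ)+2) := hψm _ _ (by linarith [hcast0 n]) (by linarith)
      have hDCBA : ψ (2*(n:ℝ)+2) - ψ (2*(n:ℝ)+1) ≤ ψ ((n:ℝ)+2) - ψ ((n:ℝ)+1) := by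
        have := hanti (show n ≤ 2*n from by omega)
        have e1 : a (2*n) = ψ (((2*n:ℕ):ℝ)+2) - ψ (((2*n:ℕ):ℝ)+1) := rfl
        have e2 : a n = ψ ((n:ℝ)+2) - ψ ((n:ℝ)+1) := rfl
        rw [e1, e2] at this
        push_cast at this
        linarith
      have h1 : (n:ℝ) * (ψ ((n:ℝ)+2) - ψ ((n:ℝ)+1)) ≤ ψ ((n:ℝ)+1) := by
        have := inc_le hmono hconc hpos n hn
        exact this
      exact core_final (ψ ((n:ℝ)+1)) (ψ ((n:ℝ)+2)) (ψ (2*(n:ℝ)+1)) (ψ (2*(n:ℝ)+2)) (n:ℝ)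
        (hψp _ (by linarith [hcast0 n])) hABle hBCle hCDle (hD2B n) hDCBA h1 hn1
    · exact Tendsto.div_atTop tendsto_const_nhds tendsto_natCast_atTop_atTop
  rw [hfinal, hωr]
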